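/- Let X be a metric space with 0 < ℋ¹(X) < ∞, and let g : X³ → [0,∞] be a Borel function with ∫_{X³} g d(ℋ¹)³ < ∞. Then for every ε > 0 there exists a Borel set Z ⊂ X such that (i) ℋ¹(Z) > diam(Z)/40, (ii) ℋ¹(Z ∩ B(z,r)) ≤ 3r for every z ∈ Z and r > 0, and (iii) ∫_{Z³} g d(ℋ¹)³ ≤ ε·diam(Z). -/

import Mathlib

open MeasureTheory Metric Set Filter
open scoped ENNReal NNReal Topology

/-- The Menger curvature of a triple of points in a metric space. -/
noncomputable def mengerCurvature {X : Type*} [MetricSpace X] (z₁ z₂ z₃ : X) : ℝ :=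
  2 * Real.sin (Real.arccos ((dist z₁ z₂ ^ 2 + dist z₂ z₃ ^ 2 - dist z₁ z₃ ^ 2) /
      (2 * dist z₁ z₂ * dist z₂ z₃))) / dist z₁ z₃

/-- The set `𝒯_K(Z)` of triples whose mutual distances are comparable with constant `K`. -/
def tripleSet {X : Type*} [MetricSpace X] (K : ℝ≥0∞) (Z : Set X) : Set (X × X × X) :=
  {p | p.1 ∈ Z ∧ p.2.1 ∈ Z ∧ p.2.2 ∈ Z ∧
    ∀ i j k l : Fin 3, k ≠ l →
      edist (![p.1, p.2.1, p.2.2] i) (![p.1, p.2.1, p.2.2] j) <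
        K * edist (![p.1, p.2.1, p.2.2] k) (![p.1, p.2.1, p.2.2] l)}

/-- The curvature energy `c²_K(Z, μ)`. -/
noncomputable def c2K {X : Type*} [MetricSpace X] [MeasurableSpace X]
    (K : ℝ≥0∞) (Z : Set X) (μ : Measure X) : ℝ≥0∞ :=
  ∫⁻ p in tripleSet K Z, ENNReal.ofReal (mengerCurvature p.1 p.2.1 p.2.2 ^ 2)
    ∂(μ.prod (μ.prod μ))

/-- `∂(z₁,z₂,z₃)`: the minimal excess over the permutations of the triple. -/
noncomputable def tripleExcess {X : Type*} [MetricSpace X] (z₁ z₂ z₃ : X) : ℝ :=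
  min (min (dist z₁ z₂ + dist z₂ z₃ - dist z₁ z₃)
           (dist z₂ z₁ + dist z₁ z₃ - dist z₂ z₃))
      (dist z₁ z₃ + dist z₃ z₂ - dist z₁ z₂)

/-- The quantity `β(Z)`. -/
noncomputable def betaInt {X : Type*} [MetricSpace X] [MeasurableSpace X] [BorelSpace X]
    (Z : Set X) : ℝ≥0∞ :=
  ∫⁻ p in Z ×ˢ Z ×ˢ Z,
    ENNReal.ofReal (tripleExcess p.1 p.2.1 p.2.2 / Metric.diam {p.1, p.2.1, p.2.2} ^ 3)
    ∂((μH[1] : Measure X).prod ((μH[1] : Measure X).prod (μH[1] : Measure X)))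

/-- A metric space is rectifiable if a Lipschitz image of a subset of `ℝ` covers it up to
`ℋ¹`-measure zero. -/
def MetricRectifiable (X : Type*) [MetricSpace X] [MeasurableSpace X] [BorelSpace X] : Prop :=
  ∃ (E : Set ℝ) (f : ℝ → X) (L : ℝ≥0), LipschitzOnWith L f E ∧
    μH[1] (Set.univ \ f '' E) = 0

/-- The relation `xyz`: `y` lies strictly between `x` and `z`. -/
def MBtw {X : Type*} [MetricSpace X] (x y z : X) : Prop :=
  max (dist x y) (dist y z) < dist x z

/-- The class `Om(φ)` for a metric space. -/
def OmSpace (X : Type*) [MetricSpace X] (φ : ℝ) : Prop :=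
  ∀ x y z : X, MBtw x y z → dist x y + φ * dist y z ≤ dist x z

/-- The condition `Om(φ)` for a subset of a metric space. -/
def OmSet {X : Type*} [MetricSpace X] (φ : ℝ) (S : Set X) : Prop :=
  ∀ x ∈ S, ∀ y ∈ S, ∀ z ∈ S, MBtw x y z → dist x y + φ * dist y z ≤ dist x z

/-- A metric space is orderable if it admits an order compatible with betweenness. -/
def Orderable (X : Type*) [MetricSpace X] : Prop :=
  ∃ o : X → ℝ, Function.Injective o ∧ ∀ x y z : X, o x < o y → o y < o z → MBtw x y z



section AuxStmt7

variable {X : Type*} [MetricSpace X] [MeasurableSpace X] [BorelSpace X]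

set_option linter.unusedSectionVars false

lemma aux_hm_le (s : Set X) (c : ℝ≥0∞)
    (h : ∀ ρ : ℝ≥0∞, 0 < ρ → ∃ (ι : Type*) (_ : Countable ι) (C : ι → Set X),
        s ⊆ ⋃ i, C i ∧ (∀ i, EMetric.diam (C i) ≤ ρ) ∧ ∑' i, EMetric.diam (C i) ≤ c) :
    μH[1] s ≤ c := by
  choose ι hι C hcov hdiam hsum using fun n : ℕ =>
    h (1 / (n + 1)) (by simp)
  haveI : ∀ n, Countable (ι n) := hι
  have hr : Tendsto (fun n : ℕ => (1 : ℝ≥0∞) / (n + 1)) atTop (𝓝 0) := by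
    simp only [one_div]
    exact ENNReal.tendsto_inv_nat_nhds_zero.comp (tendsto_add_atTop_nat 1) |>.congr
      (by intro n; simp [Nat.cast_add])
  have := Measure.hausdorffMeasure_le_liminf_tsum (X := X) 1 s
      (fun n : ℕ => (1 : ℝ≥0∞) / (n + 1)) hr C
      (Eventually.of_forall hdiam) (Eventually.of_forall hcov)
  refine this.trans (liminf_le_of_frequently_le' ?_)
  refine Frequently.of_forall fun n => le_trans (le_of_eq ?_) (hsum n)
  simp [ENNReal.rpow_one]; rfl


lemma aux_diam_closedBall (x : X) (s : ℝ) :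
    EMetric.diam (closedBall x s) ≤ ENNReal.ofReal (2*s) := by
  refine EMetric.diam_le fun a ha b hb => ?_
  rw [edist_dist]
  refine ENNReal.ofReal_le_ofReal ?_
  have h1 : dist a x ≤ s := ha
  have h2 : dist b x ≤ s := hb
  calc dist a b ≤ dist a x + dist x b := dist_triangle _ _ _
    _ ≤ s + s := by rw [dist_comm x b]; linarith
    _ = 2 * s := by ring


lemma aux_exists_ball (A : Set X) (h0 : μH[1] A ≠ 0) (hfin : μH[1] A ≠ ∞)
    (δ : ℝ) (hδ : 0 < δ) :
    ∃ z₀ ∈ A, ∃ r : ℝ, 0 < r ∧ r ≤ δ ∧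
      ENNReal.ofReal (2 * r) / 40 < μH[1] (A ∩ closedBall z₀ r) := by
  haveI := Measure.noAtoms_hausdorff X one_pos
  by_contra hcon
  push_neg at hcon
  -- hcon : ∀ z₀ ∈ A, ∀ r, 0 < r → r ≤ δ → μH[1] (A ∩ closedBall z₀ r) ≤ ofReal (2r)/40
  have key : 20 * μH[1] A ≤ μH[1] A := by
    conv_rhs => rw [Measure.hausdorffMeasure_apply]
    refine le_iSup₂_of_le (ENNReal.ofReal δ) (by simpa using hδ) ?_
    refine le_iInf fun t => le_iInf fun hcov => le_iInf fun hdiam => ?_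
    have hsub : μH[1] A ≤ ∑' n, μH[1] (A ∩ t n) := by
      refine (measure_mono ?_).trans (measure_iUnion_le _)
      intro x hx
      rcases mem_iUnion.1 (hcov hx) with ⟨n, hn⟩
      exact mem_iUnion.2 ⟨n, hx, hn⟩
    calc 20 * μH[1] A ≤ 20 * ∑' n, μH[1] (A ∩ t n) := by gcongr
      _ = ∑' n, 20 * μH[1] (A ∩ t n) := ENNReal.tsum_mul_left.symm
      _ ≤ ∑' n, ⨆ _ : (t n).Nonempty, EMetric.diam (t n) ^ (1:ℝ) := by
          refine ENNReal.tsum_le_tsum fun n => ?_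
          rcases (A ∩ t n).eq_empty_or_nonempty with he | ⟨z, hzA, hzt⟩
          · simp [he]
          have hne : (t n).Nonempty := ⟨z, hzt⟩
          rw [iSup_pos hne, ENNReal.rpow_one]
          rcases eq_or_ne (EMetric.diam (t n)) 0 with hd0 | hd0
          · have hsub : A ∩ t n ⊆ {z} := fun y hy => by
              have := EMetric.diam_eq_zero_iff.1 hd0 hy.2 hzt
              simp [this]
            have : μH[1] (A ∩ t n) = 0 :=
              le_antisymm ((measure_mono hsub).trans (measure_singleton z).le) zero_le
            simp [this]
          · have hdne : EMetric.diam (t n) ≠ ∞ :=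
              (lt_of_le_of_lt (hdiam n) ENNReal.ofReal_lt_top).ne
            set r : ℝ := (EMetric.diam (t n)).toReal with hrdef
            have hrpos : 0 < r := ENNReal.toReal_pos hd0 hdne
            have hrle : r ≤ δ := ENNReal.toReal_le_of_le_ofReal hδ.le (hdiam n)
            have hsub : A ∩ t n ⊆ A ∩ closedBall z r := by
              rintro y ⟨hyA, hyt⟩
              refine ⟨hyA, ?_⟩
              rw [mem_closedBall, dist_edist]
              exact ENNReal.toReal_mono hdne (EMetric.edist_le_diam_of_mem hyt hzt)
            have hb := (measure_mono hsub).trans (hcon z hzA r hrpos hrle)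
            calc 20 * μH[1] (A ∩ t n) ≤ 20 * (ENNReal.ofReal (2 * r) / 40) := by gcongr
              _ = EMetric.diam (t n) := by
                  rw [ENNReal.ofReal_mul (by norm_num), ENNReal.ofReal_ofNat,
                    ENNReal.ofReal_toReal hdne, mul_div_assoc]
                  rw [← mul_assoc, show (20:ℝ≥0∞) * 2 = 40 by norm_num]
                  exact ENNReal.mul_div_cancel' (by norm_num) (by norm_num)
      _ = _ := rfl
  rw [show (20 : ℝ≥0∞) * μH[1] A ≤ μH[1] A ↔ 20 * μH[1] A ≤ 1 * μH[1] A by rw [one_mul]] at key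
  have := (ENNReal.mul_le_mul_iff_left h0 hfin).1 key
  norm_num at this


lemma aux_separable (h1 : μH[1] (Set.univ : Set X) < ⊤) :
    TopologicalSpace.SeparableSpace X := by
  rcases isEmpty_or_nonempty X with hX | hX
  · exact ⟨⟨∅, countable_empty, fun x => (IsEmpty.false x).elim⟩⟩
  inhabit X
  have key : ∀ k : ℕ, ∃ D : Set X, D.Countable ∧
      ∀ x : X, ∃ y ∈ D, dist x y ≤ 1 / (k + 1) := by
    intro k
    have hlt : (⨅ (t : ℕ → Set X) (_ : (univ : Set X) ⊆ ⋃ n, t n)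
        (_ : ∀ n, EMetric.diam (t n) ≤ ENNReal.ofReal (1 / (k+1))),
        ∑' n, ⨆ _ : (t n).Nonempty, EMetric.diam (t n) ^ (1:ℝ)) < ⊤ := by
      refine lt_of_le_of_lt ?_ h1
      rw [Measure.hausdorffMeasure_apply]
      exact le_iSup₂_of_le (ENNReal.ofReal (1 / (k+1)))
        (by rw [ENNReal.ofReal_pos]; positivity) le_rfl
    rw [iInf_lt_iff] at hlt
    obtain ⟨t, hlt⟩ := hlt
    rw [iInf_lt_iff] at hlt
    obtain ⟨hcov, hlt⟩ := hlt
    rw [iInf_lt_iff] at hlt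
    obtain ⟨hdiam, -⟩ := hlt
    classical
    refine ⟨Set.range (fun n => if h : (t n).Nonempty then h.choose else default),
      countable_range _, fun x => ?_⟩
    rcases mem_iUnion.1 (hcov (mem_univ x)) with ⟨n, hn⟩
    have hne : (t n).Nonempty := ⟨x, hn⟩
    refine ⟨_, ⟨n, rfl⟩, ?_⟩
    simp only [dif_pos hne]
    have := EMetric.edist_le_diam_of_mem hn hne.choose_spec
    have h2 := this.trans (hdiam n)
    rw [edist_dist] at h2
    exact (ENNReal.ofReal_le_ofReal_iff (by positivity)).1 h2
  choose D hDc hDd using key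
  refine ⟨⟨⋃ k, D k, countable_iUnion hDc, ?_⟩⟩
  rw [Metric.dense_iff]
  intro x r hr
  obtain ⟨k, hk⟩ := exists_nat_one_div_lt (ε := r) hr
  obtain ⟨y, hy, hxy⟩ := hDd k x
  exact ⟨y, mem_ball'.2 (lt_of_le_of_lt hxy hk), mem_iUnion.2 ⟨k, hy⟩⟩


lemma aux_density [IsFiniteMeasure (μH[1] : Measure X)] (N : Set X)
    (hN : ∀ z ∈ N, ∀ θ : ℝ, 0 < θ → ∃ r : ℝ, 0 < r ∧ r < θ ∧
        ENNReal.ofReal (3 * r) < μH[1] (ball z r)) :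
    μH[1] N = 0 := by
  classical
  set μ : Measure X := μH[1] with hμdef
  have hdiamCB : ∀ (x : X) (s : ℝ), EMetric.diam (closedBall x s) ≤ ENNReal.ofReal (2*s) := by
    intro x s
    refine EMetric.diam_le fun a ha b hb => ?_
    rw [edist_dist]
    refine ENNReal.ofReal_le_ofReal ?_
    have h1 : dist a x ≤ s := ha
    have h2 : dist b x ≤ s := hb
    calc dist a b ≤ dist a x + dist x b := dist_triangle _ _ _
      _ ≤ s + s := by rw [dist_comm x b]; linarith
      _ = 2 * s := by ring
  have hNfin : μ N ≠ ∞ := measure_ne_top μ N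
  have main : ∀ ε : ℝ≥0∞, ε ≠ 0 → μ N ≤ 2 * ε := by
    intro ε hε0
    obtain ⟨U, hNU, hUopen, hUlt⟩ := Set.exists_isOpen_lt_of_lt N (μ N + ε)
      (ENNReal.lt_add_right hNfin hε0)
    have hUfin : μ U ≠ ∞ := measure_ne_top μ U
    have claim2 : ∀ η : ℝ≥0∞, η ≠ 0 → η ≠ ∞ → μ N ≤ 2 * (μ U / 3) + 10 * η := by
      intro η hη0 hηt
      refine aux_hm_le N _ (fun ρ hρ => ?_)
      obtain ⟨δ, hδ0, hδρ⟩ : ∃ δ : ℝ, 0 < δ ∧ ENNReal.ofReal (10 * δ) ≤ ρ := by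
        rcases eq_or_ne ρ ∞ with rfl | hρt
        · exact ⟨1, one_pos, le_top⟩
        · refine ⟨ρ.toReal / 20, by
            have := ENNReal.toReal_pos hρ.ne' hρt; positivity, ?_⟩
          rw [show 10 * (ρ.toReal / 20) = ρ.toReal / 2 by ring]
          calc ENNReal.ofReal (ρ.toReal / 2) ≤ ENNReal.ofReal ρ.toReal := by
                gcongr; linarith [ENNReal.toReal_nonneg (a := ρ)]
            _ = ρ := ENNReal.ofReal_toReal hρt
      set T : Set (X × ℝ) := {p | p.1 ∈ N ∧ 0 < p.2 ∧ p.2 ≤ δ ∧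
        closedBall p.1 p.2 ⊆ U ∧ ENNReal.ofReal (3 * p.2) < μ (ball p.1 p.2)} with hT
      obtain ⟨u, huT, hdisj, hVit⟩ := Vitali.exists_disjoint_subfamily_covering_enlargement
        (fun p : X × ℝ => closedBall p.1 p.2) T (fun p => p.2) 2 one_lt_two
        (fun a ha => ha.2.1.le) δ (fun a ha => ha.2.2.1)
        (fun a ha => ⟨a.1, mem_closedBall_self ha.2.1.le⟩)
      haveI hcnt : Countable ↥u := by
        have hc := Measure.countable_meas_pos_of_disjoint_iUnion (μ := μ)
          (As := fun i : ↥u => closedBall (i : X × ℝ).1 (i : X × ℝ).2)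
          (fun i => measurableSet_closedBall)
          (fun i j hij => hdisj i.2 j.2 (fun h => hij (Subtype.ext h)))
        have huniv : {i : ↥u | 0 < μ (closedBall (i : X × ℝ).1 (i : X × ℝ).2)} = Set.univ := by
          refine eq_univ_of_forall fun i => ?_
          have hi := huT i.2
          calc (0:ℝ≥0∞) < ENNReal.ofReal (3 * (i : X × ℝ).2) := by
                rw [ENNReal.ofReal_pos]; nlinarith [hi.2.1]
            _ < μ (ball (i : X × ℝ).1 (i : X × ℝ).2) := hi.2.2.2.2
            _ ≤ μ (closedBall (i : X × ℝ).1 (i : X × ℝ).2) :=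
                measure_mono ball_subset_closedBall
        rw [huniv, Set.countable_univ_iff] at hc
        exact hc
      set S : ℝ≥0∞ := ∑' i : ↥u, ENNReal.ofReal (i : X × ℝ).2 with hSdef
      have key1 : 3 * S ≤ μ U := by
        have h1 : ∀ i : ↥u, (3:ℝ≥0∞) * ENNReal.ofReal (i : X × ℝ).2
            ≤ μ (closedBall (i : X × ℝ).1 (i : X × ℝ).2) := by
          intro i
          have hi := huT i.2
          calc (3:ℝ≥0∞) * ENNReal.ofReal (i : X × ℝ).2
              = ENNReal.ofReal (3 * (i : X × ℝ).2) := by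
                rw [ENNReal.ofReal_mul (by norm_num), ENNReal.ofReal_ofNat]
            _ ≤ μ (ball (i : X × ℝ).1 (i : X × ℝ).2) := hi.2.2.2.2.le
            _ ≤ _ := measure_mono ball_subset_closedBall
        calc 3 * S = ∑' i : ↥u, (3:ℝ≥0∞) * ENNReal.ofReal (i : X × ℝ).2 :=
              ENNReal.tsum_mul_left.symm
          _ ≤ ∑' i : ↥u, μ (closedBall (i : X × ℝ).1 (i : X × ℝ).2) :=
              ENNReal.tsum_le_tsum h1
          _ = μ (⋃ i : ↥u, closedBall (i : X × ℝ).1 (i : X × ℝ).2) :=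
              (measure_iUnion (fun (i j : ↥u) hij => hdisj i.2 j.2
                  (fun h => hij (Subtype.ext h)))
                (fun i => measurableSet_closedBall)).symm
          _ ≤ μ U := measure_mono (iUnion_subset fun i => (huT i.2).2.2.2.1)
      have hS : S ≤ μ U / 3 :=
        (ENNReal.le_div_iff_mul_le (Or.inl (by norm_num)) (Or.inl (by norm_num))).2
          (by rwa [mul_comm])
      have hSfin : S ≠ ∞ :=
        (lt_of_le_of_lt hS (ENNReal.div_lt_top hUfin (by norm_num))).ne
      -- tail estimate
      have hcompl_le : ∀ (s : Set ↥u),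
          (∑' i : ↥s, ENNReal.ofReal (((i : ↥u) : X × ℝ)).2) ≤ S := by
        intro s
        rw [hSdef, tsum_subtype s (fun i : ↥u => ENNReal.ofReal ((i : X × ℝ)).2)]
        exact ENNReal.tsum_le_tsum (fun i => Set.indicator_le_self _ _ i)
      obtain ⟨F, htail⟩ : ∃ F : Finset ↥u,
          (∑' i : ↥((↑F : Set ↥u)ᶜ), ENNReal.ofReal (((i : ↥u) : X × ℝ)).2) ≤ η := by
        by_cases hSη : S ≤ η
        · exact ⟨∅, le_trans (hcompl_le _) hSη⟩
        · push_neg at hSη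
          have hS0 : S ≠ 0 := by intro h; simp [h] at hSη
          have hsub : S - η < S := ENNReal.sub_lt_self hSfin hS0 hη0
          conv_rhs at hsub => rw [hSdef, ENNReal.tsum_eq_iSup_sum]
          rw [lt_iSup_iff] at hsub
          obtain ⟨F, hF⟩ := hsub
          refine ⟨F, ?_⟩
          have hsplit := Summable.tsum_add_tsum_compl (s := (↑F : Set ↥u))
            (f := fun i : ↥u => ENNReal.ofReal ((i : X × ℝ)).2)
            ENNReal.summable ENNReal.summable
          have hFsum : (∑' i : ↥(↑F : Set ↥u), ENNReal.ofReal (((i : ↥u) : X × ℝ)).2)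
              = ∑ i ∈ F, ENNReal.ofReal ((i : X × ℝ)).2 :=
            Finset.tsum_subtype' F (fun i : ↥u => ENNReal.ofReal ((i : X × ℝ)).2)
          rw [hFsum, ← hSdef] at hsplit
          have hFfin : (∑ i ∈ F, ENNReal.ofReal ((i : X × ℝ)).2) ≠ ∞ := by
            refine (lt_of_le_of_lt ?_ hSfin.lt_top).ne
            rw [← hFsum]
            exact hcompl_le _
          have htail_eq : (∑' i : ↥((↑F : Set ↥u)ᶜ), ENNReal.ofReal (((i : ↥u) : X × ℝ)).2)
              = S - ∑ i ∈ F, ENNReal.ofReal ((i : X × ℝ)).2 := by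
            rw [← hsplit, ENNReal.add_sub_cancel_left hFfin]
          rw [htail_eq, tsub_le_iff_left]
          calc S ≤ (S - η) + η := le_tsub_add
            _ ≤ (∑ i ∈ F, ENNReal.ofReal ((i : X × ℝ)).2) + η := add_le_add_left hF.le _
      -- the cover
      refine ⟨↥u, hcnt, fun i => if i ∈ F then closedBall ((i : X × ℝ)).1 ((i : X × ℝ)).2
        else closedBall ((i : X × ℝ)).1 (5 * ((i : X × ℝ)).2), ?_, ?_, ?_⟩
      · -- coverage
        intro z hz
        by_cases hzF : ∃ i : ↥u, i ∈ F ∧ z ∈ closedBall ((i : X × ℝ)).1 ((i : X × ℝ)).2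
        · obtain ⟨i, hiF, hzi⟩ := hzF
          exact mem_iUnion.2 ⟨i, by simp only [if_pos hiF]; exact hzi⟩
        · push_neg at hzF
          set K : Set X := ⋃ i ∈ F, closedBall ((i : X × ℝ)).1 ((i : X × ℝ)).2 with hK
          have hKclosed : IsClosed K :=
            (F.finite_toSet).isClosed_biUnion (fun i _ => isClosed_closedBall)
          have hzK : z ∉ K := by
            intro hzk
            rcases mem_iUnion₂.1 hzk with ⟨i, hiF, hzi⟩
            exact hzF i hiF hzi
          have hzUK : z ∈ U \ K := ⟨hNU hz, hzK⟩
          have hopen : IsOpen (U \ K) := hUopen.sdiff hKclosed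
          obtain ⟨ρz, hρz0, hρzsub⟩ := Metric.isOpen_iff.1 hopen z hzUK
          obtain ⟨r, hr0, hrlt, hrmeas⟩ := hN z hz (min δ (ρz / 2))
            (lt_min hδ0 (by positivity))
          have haT : (z, r) ∈ T := by
            refine ⟨hz, hr0, (lt_min_iff.1 hrlt).1.le, ?_, hrmeas⟩
            refine subset_trans (closedBall_subset_ball ?_) (hρzsub.trans diff_subset)
            have := (lt_min_iff.1 hrlt).2
            linarith
          obtain ⟨b, hbu, hbint, hble⟩ := hVit (z, r) haT
          have hb2pos : 0 < b.2 := (huT hbu).2.1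
          have hbF : (⟨b, hbu⟩ : ↥u) ∉ F := by
            intro hbF
            obtain ⟨w, hw1, hw2⟩ := hbint
            have hwK : w ∈ K := mem_iUnion₂.2 ⟨⟨b, hbu⟩, hbF, hw2⟩
            have : w ∈ U \ K := hρzsub (closedBall_subset_ball (by
              have := (lt_min_iff.1 hrlt).2; linarith) hw1)
            exact this.2 hwK
          refine mem_iUnion.2 ⟨⟨b, hbu⟩, ?_⟩
          simp only [if_neg hbF]
          obtain ⟨w, hw1, hw2⟩ := hbint
          have h1 : dist w z ≤ r := hw1
          have h2 : dist w b.1 ≤ b.2 := hw2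
          have h3 : (z, r).2 ≤ 2 * b.2 := hble
          simp only [mem_closedBall]
          calc dist z b.1 ≤ dist z w + dist w b.1 := dist_triangle _ _ _
            _ ≤ r + b.2 := by rw [dist_comm z w]; linarith
            _ ≤ 5 * b.2 := by simp only at h3; linarith
      · -- diameters
        intro i
        have hi := huT i.2
        by_cases hiF : i ∈ F
        · simp only [if_pos hiF]
          refine (hdiamCB _ _).trans (le_trans ?_ hδρ)
          refine ENNReal.ofReal_le_ofReal ?_
          have := hi.2.2.1; have := hi.2.1
          linarith
        · simp only [if_neg hiF]
          refine (hdiamCB _ _).trans (le_trans ?_ hδρ)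
          refine ENNReal.ofReal_le_ofReal ?_
          have := hi.2.2.1
          linarith
      · -- sum bound
        have hterm : ∀ i : ↥u,
            EMetric.diam (if i ∈ F then closedBall ((i : X × ℝ)).1 ((i : X × ℝ)).2
              else closedBall ((i : X × ℝ)).1 (5 * ((i : X × ℝ)).2))
            ≤ 2 * ENNReal.ofReal ((i : X × ℝ)).2
              + ((↑F : Set ↥u)ᶜ).indicator
                  (fun i : ↥u => 10 * ENNReal.ofReal ((i : X × ℝ)).2) i := by
          intro i
          have hr0 : 0 ≤ ((i : X × ℝ)).2 := (huT i.2).2.1.le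
          by_cases hiF : i ∈ F
          · simp only [if_pos hiF]
            refine (hdiamCB _ _).trans ?_
            rw [ENNReal.ofReal_mul (by norm_num), ENNReal.ofReal_ofNat]
            exact le_add_of_le_of_nonneg le_rfl zero_le
          · simp only [if_neg hiF,
              Set.indicator_of_mem (show i ∈ (↑F : Set ↥u)ᶜ by simpa using hiF)]
            refine (hdiamCB _ _).trans ?_
            have h25 : (2:ℝ) * (5 * ((i : X × ℝ)).2) = 10 * ((i : X × ℝ)).2 := by ring
            rw [h25, ENNReal.ofReal_mul (by norm_num), ENNReal.ofReal_ofNat]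
            exact le_add_of_nonneg_left zero_le
        calc (∑' i : ↥u, EMetric.diam (if i ∈ F then closedBall ((i : X × ℝ)).1 ((i : X × ℝ)).2
              else closedBall ((i : X × ℝ)).1 (5 * ((i : X × ℝ)).2)))
            ≤ ∑' i : ↥u, (2 * ENNReal.ofReal ((i : X × ℝ)).2
              + ((↑F : Set ↥u)ᶜ).indicator
                  (fun i : ↥u => 10 * ENNReal.ofReal ((i : X × ℝ)).2) i) :=
              ENNReal.tsum_le_tsum hterm
          _ = (∑' i : ↥u, 2 * ENNReal.ofReal ((i : X × ℝ)).2)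
              + ∑' i : ↥u, ((↑F : Set ↥u)ᶜ).indicator
                  (fun i : ↥u => 10 * ENNReal.ofReal ((i : X × ℝ)).2) i := ENNReal.tsum_add
          _ = 2 * S + ∑' i : ↥((↑F : Set ↥u)ᶜ), 10 * ENNReal.ofReal (((i : ↥u) : X × ℝ)).2 := by
              rw [ENNReal.tsum_mul_left, ← hSdef,
                tsum_subtype ((↑F : Set ↥u)ᶜ)
                  (fun i : ↥u => 10 * ENNReal.ofReal ((i : X × ℝ)).2)]
          _ = 2 * S + 10 * ∑' i : ↥((↑F : Set ↥u)ᶜ), ENNReal.ofReal (((i : ↥u) : X × ℝ)).2 := by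
              rw [ENNReal.tsum_mul_left]
          _ ≤ 2 * (μ U / 3) + 10 * η := by gcongr
    -- from claim2 to the conclusion
    have step1 : μ N ≤ 2 * (μ U / 3) := by
      refine ENNReal.le_of_forall_pos_le_add fun e he hb => ?_
      have h10 : (10:ℝ≥0∞) * ((e : ℝ≥0∞) / 10) = (e : ℝ≥0∞) :=
        ENNReal.mul_div_cancel' (by norm_num) (by norm_num)
      have := claim2 ((e : ℝ≥0∞) / 10)
        (by simp [ENNReal.div_eq_zero_iff]; exact_mod_cast he.ne')
        (by simp [ENNReal.div_eq_top])
      rwa [h10] at this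
    have step2 : 3 * μ N ≤ 2 * μ U := by
      calc 3 * μ N ≤ 3 * (2 * (μ U / 3)) := by gcongr
        _ = 2 * (3 * (μ U / 3)) := by ring
        _ = 2 * μ U := by rw [ENNReal.mul_div_cancel' (by norm_num) (by norm_num)]
    have step3 : 2 * μ N + μ N ≤ 2 * μ N + 2 * ε := by
      calc 2 * μ N + μ N = 3 * μ N := by ring
        _ ≤ 2 * μ U := step2
        _ ≤ 2 * (μ N + ε) := mul_le_mul_right hUlt.le 2
        _ = 2 * μ N + 2 * ε := by ring
    exact (ENNReal.add_le_add_iff_left (ENNReal.mul_ne_top (by norm_num) hNfin)).1 step3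
  -- conclude
  have : μ N ≤ 0 := by
    refine ENNReal.le_of_forall_pos_le_add fun e he hb => ?_
    have h2 : (2:ℝ≥0∞) * ((e : ℝ≥0∞) / 2) = (e : ℝ≥0∞) :=
      ENNReal.mul_div_cancel' (by norm_num) (by norm_num)
    have := main ((e : ℝ≥0∞) / 2)
      (by simp [ENNReal.div_eq_zero_iff]; exact_mod_cast he.ne')
    rw [h2] at this
    simpa using this
  exact le_antisymm this zero_le


lemma aux_measure_ball_sup (ν : Measure X) (z : X) {s : ℝ} (hs : 0 < s)
    {c : ℝ≥0∞} (h : ∀ s' : ℝ, 0 < s' → s' < s → ν (ball z s') ≤ c) :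
    ν (ball z s) ≤ c := by
  classical
  have hcov : ball z s = ⋃ n : ℕ, ball z (s - s / (n + 2)) := by
    ext x
    simp only [mem_ball, mem_iUnion]
    constructor
    · intro hx
      obtain ⟨n, hn⟩ := exists_nat_gt (s / (s - dist x z))
      refine ⟨n, ?_⟩
      have hpos : 0 < s - dist x z := by linarith
      have h2 : s / (s - dist x z) < n + 2 := by
        have : (0:ℝ) ≤ n := Nat.cast_nonneg n
        linarith
      have : s / (n + 2) < s - dist x z := by
        rw [div_lt_iff₀ (by positivity)] at h2 ⊢
        · nlinarith
      linarith
    · rintro ⟨n, hn⟩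
      have : 0 < s / (n+2) := by positivity
      linarith
  have hdir : Directed (· ⊆ ·) (fun n : ℕ => ball z (s - s / (n + 2))) := by
    intro m n
    rcases le_total (s - s/(m+2)) (s - s/(n+2)) with h | h
    · exact ⟨n, ball_subset_ball h, ball_subset_ball le_rfl⟩
    · exact ⟨m, ball_subset_ball le_rfl, ball_subset_ball h⟩
  rw [hcov, hdir.measure_iUnion]
  refine iSup_le fun n => ?_
  rcases le_or_gt (s - s/(n+2)) 0 with hle | hpos
  · have : ball z (s - s/(n+2)) = ∅ := ball_eq_empty.2 hle
    simp [this]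
  · refine h _ hpos (by
      have : 0 < s / (n+2) := by positivity
      linarith)


lemma aux_sq_closed (q : ℝ) (c : ℝ≥0∞) :
    IsClosed {z : X | μH[1] (ball z q) ≤ c} := by
  rcases le_or_gt q 0 with hq | hq
  · have : {z : X | μH[1] (ball z q) ≤ c} = univ := by
      refine eq_univ_of_forall fun z => ?_
      simp [ball_eq_empty.2 hq]
    rw [this]; exact isClosed_univ
  refine isClosed_of_closure_subset fun z hz => ?_
  refine aux_measure_ball_sup _ z hq fun s' hs' hs'q => ?_
  obtain ⟨z', hz'mem, hz'dist⟩ := Metric.mem_closure_iff.1 hz (q - s') (by linarith)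
  refine le_trans (measure_mono ?_) hz'mem
  intro y hy
  have h1 : dist y z < s' := hy
  have h2 : dist z z' < q - s' := hz'dist
  exact mem_ball.2 (by
    calc dist y z' ≤ dist y z + dist z z' := dist_triangle _ _ _
      _ < q := by linarith)


lemma aux_G_real (R : ℝ) (z : X)
    (hz : ∀ q : ℚ, 0 < (q:ℝ) → (q:ℝ) < R → μH[1] (ball z (q:ℝ)) ≤ ENNReal.ofReal (3*(q:ℝ)))
    {s : ℝ} (hs : 0 < s) (hsR : s < R) :
    μH[1] (ball z s) ≤ ENNReal.ofReal (3*s) := by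
  refine aux_measure_ball_sup _ z hs fun s' hs' hs's => ?_
  obtain ⟨q, hq1, hq2⟩ := exists_rat_btwn hs's
  calc μH[1] (ball z s') ≤ μH[1] (ball z (q:ℝ)) := measure_mono (ball_subset_ball (by linarith))
    _ ≤ ENNReal.ofReal (3*(q:ℝ)) := hz q (by linarith) (by linarith)
    _ ≤ ENNReal.ofReal (3*s) := ENNReal.ofReal_le_ofReal (by linarith)

end AuxStmt7

/-- Let `X` be a metric space with `0 < ℋ¹(X) < ∞` and let `g : X³ → [0,∞]`
be a Borel function with `∫_{X³} g d(ℋ¹)³ < ∞`. Then for every `ε > 0` there is a Borel set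
`Z ⊆ X` with `ℋ¹(Z) > diam Z / 40`, `ℋ¹(Z ∩ B(z,r)) ≤ 3r` for all `z ∈ Z`, `r > 0`, and
`∫_{Z³} g d(ℋ¹)³ ≤ ε·diam Z`. -/
theorem stmt7 (X : Type*) [MetricSpace X] [MeasurableSpace X] [BorelSpace X]
    (h0 : 0 < μH[1] (Set.univ : Set X)) (h1 : μH[1] (Set.univ : Set X) < ⊤)
    (g : X × X × X → ℝ≥0∞) (hg : Measurable g)
    (hgint : (∫⁻ p, g p
        ∂((μH[1] : Measure X).prod ((μH[1] : Measure X).prod (μH[1] : Measure X)))) < ⊤)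
    (ε : ℝ) (hε : 0 < ε) :
    ∃ Z : Set X, MeasurableSet Z ∧
      EMetric.diam Z / 40 < μH[1] Z ∧
      (∀ z ∈ Z, ∀ r : ℝ, 0 < r →
        μH[1] (Z ∩ Metric.closedBall z r) ≤ ENNReal.ofReal (3 * r)) ∧
      (∫⁻ p in Z ×ˢ Z ×ˢ Z, g p
        ∂((μH[1] : Measure X).prod ((μH[1] : Measure X).prod (μH[1] : Measure X)))) ≤
        ENNReal.ofReal ε * EMetric.diam Z := by
  classical
  haveI hfinM : IsFiniteMeasure (μH[1] : Measure X) := ⟨h1⟩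
  haveI hsep : TopologicalSpace.SeparableSpace X := aux_separable h1
  haveI : SecondCountableTopology X := UniformSpace.secondCountable_of_separable X
  haveI := Measure.noAtoms_hausdorff X one_pos
  set μ : Measure X := (μH[1] : Measure X) with hμdef
  set Q : Measure (X × X) := μ.prod μ with hQdef
  -- the good sets G k
  set G : ℕ → Set X := fun k => {z : X | ∀ q : ℚ, 0 < (q:ℝ) → (q:ℝ) < 1/(k+1) →
    μ (ball z (q:ℝ)) ≤ ENNReal.ofReal (3*(q:ℝ))} with hGdef
  have hGclosed : ∀ k, IsClosed (G k) := by
    intro k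
    have : G k = ⋂ (q : ℚ) (_ : 0 < (q:ℝ)) (_ : (q:ℝ) < 1/(k+1)),
        {z : X | μ (ball z (q:ℝ)) ≤ ENNReal.ofReal (3*(q:ℝ))} := by
      ext z; simp [hGdef, mem_iInter]
    rw [this]
    exact isClosed_iInter fun q => isClosed_iInter fun _ => isClosed_iInter fun _ =>
      aux_sq_closed _ _
  have hGcompl : μ ((⋃ k, G k)ᶜ) = 0 := by
    refine aux_density _ (fun z hz θ hθ => ?_)
    rw [mem_compl_iff, mem_iUnion] at hz
    push_neg at hz
    obtain ⟨k, hk⟩ := exists_nat_one_div_lt (ε := θ) hθ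
    have hzk := hz k
    rw [hGdef, mem_setOf] at hzk
    push_neg at hzk
    obtain ⟨q, hq0, hqk, hqm⟩ := hzk
    exact ⟨q, hq0, hqk.trans hk, hqm⟩
  obtain ⟨k₀, hk₀⟩ : ∃ k, μ (G k) ≠ 0 := by
    by_contra hall
    push_neg at hall
    have hu : μ (⋃ k, G k) = 0 :=
      le_antisymm ((measure_iUnion_le _).trans (by simp [hall])) zero_le
    have huniv : μ (univ : Set X) = 0 := by
      have hle := measure_union_le (μ := μ) (⋃ k, G k) (⋃ k, G k)ᶜ
      rw [union_compl_self, hu, hGcompl] at hle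
      simpa using hle
    exact absurd huniv h0.ne'
  set rk : ℝ := 1/(k₀+1) with hrk
  have hrkpos : 0 < rk := by rw [hrk]; positivity
  -- the functionals Ψ m and bad sets E m
  set Ψ : ℕ → X → ℝ≥0∞ := fun m z =>
    ∫⁻ q in (closedBall z (1/(m+1)) ×ˢ closedBall z (1/(m+1))), g (z, q) ∂Q with hΨdef
  have hΨmeas : ∀ m, Measurable (Ψ m) := by
    intro m
    set S : Set (X × (X × X)) := {p : X × (X × X) |
        dist p.2.1 p.1 ≤ 1/(m+1) ∧ dist p.2.2 p.1 ≤ 1/(m+1)} with hSdef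
    have hSclosed : IsClosed S := by
      apply IsClosed.inter
      · exact isClosed_le (Continuous.dist (continuous_fst.comp continuous_snd)
          continuous_fst) continuous_const
      · exact isClosed_le (Continuous.dist (continuous_snd.comp continuous_snd)
          continuous_fst) continuous_const
    have hmeas : Measurable (S.indicator g) := hg.indicator hSclosed.measurableSet
    have hrep : Ψ m = fun z => ∫⁻ q, S.indicator g (z, q) ∂Q := by
      funext z
      have hpt : (fun q : X × X => S.indicator g (z, q))
          = (closedBall z (1/(m+1)) ×ˢ closedBall z (1/(m+1))).indicator
              (fun q => g (z, q)) := by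
        funext q
        by_cases hq : q ∈ closedBall z (1/(m+1)) ×ˢ closedBall z (1/(m+1))
        · rw [Set.indicator_of_mem hq,
            Set.indicator_of_mem (show (z, q) ∈ S from ⟨hq.1, hq.2⟩)]
        · rw [Set.indicator_of_notMem hq,
            Set.indicator_of_notMem (fun hmem => hq ⟨hmem.1, hmem.2⟩)]
      calc Ψ m z = ∫⁻ q in closedBall z (1/(m+1)) ×ˢ closedBall z (1/(m+1)),
            g (z, q) ∂Q := rfl
        _ = ∫⁻ q, (closedBall z (1/(m+1)) ×ˢ closedBall z (1/(m+1))).indicator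
              (fun q => g (z, q)) q ∂Q :=
            (lintegral_indicator (measurableSet_closedBall.prod measurableSet_closedBall)
              _).symm
        _ = ∫⁻ q, S.indicator g (z, q) ∂Q := by rw [hpt]
    rw [hrep]
    exact hmeas.lintegral_prod_right'
  have hΨanti : ∀ z, Antitone (fun m => Ψ m z) := by
    intro z m m' hmm'
    refine lintegral_mono_set (Set.prod_mono (closedBall_subset_closedBall ?_)
      (closedBall_subset_closedBall ?_)) <;>
    · apply one_div_le_one_div_of_le (by positivity)
      exact_mod_cast by omega
  set E : ℕ → Set X := fun m => {z : X | ENNReal.ofReal (ε/3) < Ψ m z} with hEdef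
  have hEmeas : ∀ m, MeasurableSet (E m) :=
    fun m => measurableSet_lt measurable_const (hΨmeas m)
  have hEanti : Antitone E := by
    intro m m' hmm' z hz
    exact lt_of_lt_of_le hz (hΨanti z hmm')
  -- the intersection of the E m is null
  have hslice_meas : Measurable fun z => ∫⁻ q, g (z, q) ∂Q := hg.lintegral_prod_right'
  have hslice : ∀ᵐ z ∂μ, (∫⁻ q, g (z, q) ∂Q) < ∞ := by
    refine ae_lt_top hslice_meas ?_
    rw [← lintegral_prod g hg.aemeasurable]
    exact hgint.ne
  have hE0 : μ (⋂ m, E m) = 0 := by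
    refine measure_mono_null ?_ (ae_iff.1 hslice)
    intro z hz
    simp only [mem_setOf_eq, not_lt, top_le_iff]
    by_contra hfin
    have htend : Tendsto (fun m => Ψ m z) atTop (𝓝 0) := by
      have hrep : ∀ m, Ψ m z = (Q.withDensity (fun q => g (z, q)))
          (closedBall z (1/(m+1)) ×ˢ closedBall z (1/(m+1))) := by
        intro m
        rw [hΨdef, withDensity_apply _ (measurableSet_closedBall.prod measurableSet_closedBall)]
      have hmono : Antitone (fun m : ℕ => closedBall z (1/(m+1)) ×ˢ closedBall z (1/(m+1))) := by
        intro m m' hmm'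
        refine Set.prod_mono (closedBall_subset_closedBall ?_) (closedBall_subset_closedBall ?_) <;>
        · apply one_div_le_one_div_of_le (by positivity)
          exact_mod_cast by omega
      have hinter : (⋂ m : ℕ, closedBall z (1/(m+1)) ×ˢ closedBall z (1/(m+1)))
          = ({z} : Set X) ×ˢ ({z} : Set X) := by
        ext p
        simp only [mem_iInter, mem_prod, mem_closedBall, mem_singleton_iff]
        constructor
        · intro h
          have h1 : dist p.1 z ≤ 0 := by
            refine le_of_forall_pos_le_add fun e he => ?_
            obtain ⟨n, hn⟩ := exists_nat_one_div_lt (ε := e) he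
            have := (h n).1
            linarith
          have h2 : dist p.2 z ≤ 0 := by
            refine le_of_forall_pos_le_add fun e he => ?_
            obtain ⟨n, hn⟩ := exists_nat_one_div_lt (ε := e) he
            have := (h n).2
            linarith
          constructor <;> [skip; skip] <;>
            first
              | exact dist_le_zero.1 h1
              | exact dist_le_zero.1 h2
        · rintro ⟨h1, h2⟩
          intro m
          simp [h1, h2, dist_self]
          positivity
      have hfinw : (Q.withDensity (fun q => g (z, q))) Set.univ ≠ ∞ := by
        rw [withDensity_apply _ MeasurableSet.univ, Measure.restrict_univ]
        exact hfin
      have htd := tendsto_measure_iInter_atTop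
        (μ := Q.withDensity (fun q => g (z, q)))
        (fun m => (measurableSet_closedBall.prod measurableSet_closedBall).nullMeasurableSet)
        hmono ⟨0, ne_top_of_le_ne_top hfinw (measure_mono (subset_univ _))⟩
      rw [hinter] at htd
      have hz0 : (Q.withDensity (fun q => g (z, q))) (({z}:Set X) ×ˢ ({z}:Set X)) = 0 := by
        have hQ0 : Q (({z}:Set X) ×ˢ ({z}:Set X)) = 0 := by
          rw [hQdef, Measure.prod_prod, measure_singleton, mul_zero]
        exact measure_mono_null (subset_refl _)
          (withDensity_absolutelyContinuous Q _ hQ0)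
      rw [hz0] at htd
      exact htd.congr (fun m => (hrep m).symm)
    have hcontr := htend.eventually_lt_const (show (0:ℝ≥0∞) < ENNReal.ofReal (ε/3) by
      rw [ENNReal.ofReal_pos]; positivity)
    obtain ⟨m, hm⟩ := hcontr.exists
    exact absurd (mem_iInter.1 hz m) (not_lt.2 hm.le)
  -- choose m₀ with small bad set
  obtain ⟨m₀, hm₀⟩ : ∃ m, μ (E m) < μ (G k₀) := by
    have htd := tendsto_measure_iInter_atTop (μ := μ)
      (fun m => (hEmeas m).nullMeasurableSet) hEanti ⟨0, measure_ne_top μ _⟩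
    rw [hE0] at htd
    have := htd.eventually_lt_const (show (0:ℝ≥0∞) < μ (G k₀) from
      pos_iff_ne_zero.2 hk₀)
    exact this.exists
  set rm : ℝ := 1/(m₀+1) with hrm
  have hrmpos : 0 < rm := by rw [hrm]; positivity
  set A : Set X := G k₀ \ E m₀ with hAdef
  have hAmeas : MeasurableSet A := (hGclosed k₀).measurableSet.diff (hEmeas m₀)
  have hA0 : μ A ≠ 0 := by
    intro hA
    have : μ (G k₀) ≤ μ A + μ (E m₀) := by
      refine (measure_mono ?_).trans (measure_union_le _ _)
      intro z hz
      by_cases hzE : z ∈ E m₀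
      · exact Or.inr hzE
      · exact Or.inl ⟨hz, hzE⟩
    rw [hA, zero_add] at this
    exact absurd (lt_of_le_of_lt this hm₀) (lt_irrefl _)
  -- pick the good ball
  set δ₀ : ℝ := min (rk/3) (rm/2) with hδ₀
  have hδ₀pos : 0 < δ₀ := lt_min (by positivity) (by positivity)
  obtain ⟨z₀, hz₀A, r, hr0, hrδ, hrμ⟩ := aux_exists_ball A hA0 (measure_ne_top μ A) δ₀ hδ₀pos
  set Z : Set X := A ∩ closedBall z₀ r with hZdef
  have hZmeas : MeasurableSet Z := hAmeas.inter measurableSet_closedBall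
  have hGsub : Z ⊆ G k₀ := fun z hz => hz.1.1
  -- property (b)
  have hbZ : ∀ z ∈ Z, ∀ s : ℝ, 0 < s → μ (Z ∩ closedBall z s) ≤ ENNReal.ofReal (3*s) := by
    intro z hz s hs
    have hzG : z ∈ G k₀ := hGsub hz
    have hGz : ∀ s' : ℝ, 0 < s' → s' < rk → μ (ball z s') ≤ ENNReal.ofReal (3*s') := by
      intro s' hs1 hs2
      exact aux_G_real rk z (fun q hq1 hq2 => hzG q hq1 hq2) hs1 hs2
    rcases lt_or_ge s rk with hcase | hcase
    · refine ENNReal.le_of_forall_pos_le_add fun e he _ => ?_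
      have hepos : (0:ℝ) < (e:ℝ) := he
      set s' : ℝ := min (s + (e:ℝ)/6) ((s + rk)/2) with hs'
      have hs's : s < s' := lt_min (by linarith) (by linarith)
      have hs'k : s' < rk := (min_le_right _ _).trans_lt (by linarith)
      have hs'bound : 3*s' ≤ 3*s + (e:ℝ)/2 := by
        have h := min_le_left (s + (e:ℝ)/6) ((s + rk)/2)
        rw [← hs'] at h
        linarith
      calc μ (Z ∩ closedBall z s) ≤ μ (ball z s') :=
            measure_mono ((inter_subset_right).trans (closedBall_subset_ball hs's))
        _ ≤ ENNReal.ofReal (3*s') := hGz s' (by linarith) hs'k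
        _ ≤ ENNReal.ofReal (3*s + (e:ℝ)/2) := ENNReal.ofReal_le_ofReal hs'bound
        _ = ENNReal.ofReal (3*s) + ENNReal.ofReal ((e:ℝ)/2) :=
            ENNReal.ofReal_add (by positivity) (by positivity)
        _ ≤ ENNReal.ofReal (3*s) + (e:ℝ≥0∞) := by
            refine add_le_add_right ?_ _
            rw [← ENNReal.ofReal_coe_nnreal]
            exact ENNReal.ofReal_le_ofReal (by linarith)
    · have hrb : r ≤ rk/3 := hrδ.trans (min_le_left _ _)
      have hZsub : Z ⊆ ball z (5/6*rk) := by
        intro y hy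
        have hyd : dist y z₀ ≤ r := hy.2
        have hzd : dist z z₀ ≤ r := hz.2
        have hyz : dist y z ≤ 2*r :=
          (dist_triangle y z₀ z).trans (by rw [dist_comm z₀ z]; linarith)
        exact mem_ball.2 (by linarith)
      calc μ (Z ∩ closedBall z s) ≤ μ (ball z (5/6*rk)) :=
            measure_mono ((inter_subset_left).trans hZsub)
        _ ≤ ENNReal.ofReal (3*(5/6*rk)) := hGz _ (by positivity) (by linarith)
        _ ≤ ENNReal.ofReal (3*s) := ENNReal.ofReal_le_ofReal (by linarith)
  -- diameter facts
  have hdZ : EMetric.diam Z ≤ ENNReal.ofReal (2*r) :=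
    le_trans (EMetric.diam_mono inter_subset_right) (aux_diam_closedBall z₀ r)
  have hdfin : EMetric.diam Z ≠ ∞ := (lt_of_le_of_lt hdZ ENNReal.ofReal_lt_top).ne
  have hZμpos : 0 < μ Z := lt_of_le_of_lt zero_le hrμ
  have hZ0 : μ Z ≠ 0 := hZμpos.ne'
  have hZne : Z.Nonempty := nonempty_of_measure_ne_zero hZ0
  have hdpos : EMetric.diam Z ≠ 0 := by
    intro hd
    obtain ⟨z₁, hz₁⟩ := hZne
    have hsub : Z ⊆ {z₁} := fun y hy =>
      mem_singleton_iff.2 (EMetric.diam_eq_zero_iff.1 hd hy hz₁)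
    exact hZ0 (le_antisymm ((measure_mono hsub).trans_eq (measure_singleton z₁)) zero_le)
  set D : ℝ := (EMetric.diam Z).toReal with hD
  have hD0 : 0 < D := ENNReal.toReal_pos hdpos hdfin
  obtain ⟨z₁, hz₁⟩ := hZne
  have hZD : Z ⊆ closedBall z₁ D := by
    intro y hy
    rw [mem_closedBall, dist_edist]
    exact ENNReal.toReal_mono hdfin (EMetric.edist_le_diam_of_mem hy hz₁)
  have hμZ3 : μ Z ≤ 3 * EMetric.diam Z := by
    calc μ Z = μ (Z ∩ closedBall z₁ D) := by rw [inter_eq_left.2 hZD]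
      _ ≤ ENNReal.ofReal (3*D) := hbZ z₁ hz₁ D hD0
      _ = 3 * EMetric.diam Z := by
          rw [ENNReal.ofReal_mul (by norm_num), ENNReal.ofReal_ofNat,
            ENNReal.ofReal_toReal hdfin]
  -- the integral bound
  have h2rrm : 2*r ≤ rm := by
    have : r ≤ rm/2 := hrδ.trans (min_le_right _ _)
    linarith
  have hkey : (∫⁻ p in Z ×ˢ Z ×ˢ Z, g p ∂(μ.prod (μ.prod μ)))
      ≤ ENNReal.ofReal (ε/3) * μ Z := by
    rw [← Measure.prod_restrict, ← Measure.prod_restrict,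
      lintegral_prod g hg.aemeasurable]
    have hbound : ∀ z ∈ Z, (∫⁻ q, g (z, q) ∂((μ.restrict Z).prod (μ.restrict Z)))
        ≤ ENNReal.ofReal (ε/3) := by
      intro z hz
      have hzE' : ¬ (ENNReal.ofReal (ε/3) < Ψ m₀ z) := hz.1.2
      have hsub2 : Z ⊆ closedBall z (1/(m₀+1)) := by
        intro y hy
        have hyd : dist y z₀ ≤ r := hy.2
        have hzd : dist z z₀ ≤ r := hz.2
        refine mem_closedBall.2 ?_
        calc dist y z ≤ dist y z₀ + dist z₀ z := dist_triangle _ _ _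
          _ ≤ 2*r := by rw [dist_comm z₀ z]; linarith
          _ ≤ 1/(m₀+1) := by rw [← hrm]; exact h2rrm
      have hmono2 : (∫⁻ q in Z ×ˢ Z, g (z, q) ∂(μ.prod μ))
          ≤ ∫⁻ q in (closedBall z (1/(m₀+1)) ×ˢ closedBall z (1/(m₀+1))),
              g (z, q) ∂(μ.prod μ) :=
        lintegral_mono_set (Set.prod_mono hsub2 hsub2)
      have hfinish : (∫⁻ q, g (z, q) ∂((μ.restrict Z).prod (μ.restrict Z)))
          ≤ Ψ m₀ z := by
        rw [Measure.prod_restrict]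
        exact hmono2
      exact hfinish.trans (not_lt.1 hzE')
    calc (∫⁻ z, ∫⁻ q, g (z, q) ∂((μ.restrict Z).prod (μ.restrict Z)) ∂(μ.restrict Z))
        ≤ ∫⁻ _ in Z, ENNReal.ofReal (ε/3) ∂μ := setLIntegral_mono measurable_const hbound
      _ = ENNReal.ofReal (ε/3) * μ Z := setLIntegral_const _ _
  have hfinal : (∫⁻ p in Z ×ˢ Z ×ˢ Z, g p ∂(μ.prod (μ.prod μ)))
      ≤ ENNReal.ofReal ε * EMetric.diam Z := by
    calc (∫⁻ p in Z ×ˢ Z ×ˢ Z, g p ∂(μ.prod (μ.prod μ)))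
        ≤ ENNReal.ofReal (ε/3) * μ Z := hkey
      _ ≤ ENNReal.ofReal (ε/3) * (3 * EMetric.diam Z) := mul_le_mul_right hμZ3 _
      _ = ENNReal.ofReal ε * EMetric.diam Z := by
          rw [← mul_assoc]
          congr 1
          rw [show (3:ℝ≥0∞) = ENNReal.ofReal (3:ℝ) by norm_num,
            ← ENNReal.ofReal_mul (by positivity), div_mul_cancel₀]
          norm_num
  exact ⟨Z, hZmeas, lt_of_le_of_lt (ENNReal.div_le_div_right hdZ 40) hrμ, hbZ, hfinal⟩
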